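/- Let f : I \ D → I be a piecewise C¹ expanding map with finitely many monotone branches I₁,…,I_l, |f'| ≥ σ > 2 on each branch, and I \ (⋃_j I_j) finite. Then for each δ > 0 there exists n = n(δ) ∈ ℕ such that every open interval J ⊆ ⋃_j I_j with |J| ≥ δ admits 0 ≤ k ≤ n, a subinterval Ĵ ⊆ J, and a branch index 1 ≤ j ≤ l with f^k|Ĵ : Ĵ → I_j a diffeomorphism (onto the whole branch domain I_j). -/

import Mathlib

open Set


lemma aux_open_eq_Ioo (S : Set ℝ) (hO : IsOpen S) (hne : S.Nonempty)
    (hbb : BddBelow S) (hba : BddAbove S) (hoc : S.OrdConnected) :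
    S = Ioo (sInf S) (sSup S) := by
  ext x
  constructor
  · intro hx
    obtain ⟨ε, εpos, hball⟩ := Metric.isOpen_iff.1 hO x hx
    constructor
    · have h1 : x - ε/2 ∈ S := by
        apply hball
        simp [Real.dist_eq, abs_of_pos, εpos]
      calc sInf S ≤ x - ε/2 := csInf_le hbb h1
        _ < x := by linarith
    · have h1 : x + ε/2 ∈ S := by
        apply hball
        simp [Real.dist_eq, abs_of_pos, εpos]
      calc x < x + ε/2 := by linarith
        _ ≤ sSup S := le_csSup hba h1
  · rintro ⟨h1, h2⟩
    obtain ⟨u, hu, hux⟩ := exists_lt_of_csInf_lt hne h1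
    obtain ⟨v, hv, hxv⟩ := exists_lt_of_lt_csSup hne h2
    exact hoc.out hu hv ⟨hux.le, hxv.le⟩

lemma aux_pullback (g : ℝ → ℝ) (c d A B e e' : ℝ)
    (hbij : Set.BijOn g (Ioo c d) (Ioo A B))
    (hcont : ContinuousOn g (Ioo c d))
    (hmono : StrictMonoOn g (Ioo c d) ∨ StrictAntiOn g (Ioo c d))
    (hee : e < e') (hsub : Ioo e e' ⊆ Ioo A B) :
    ∃ p q : ℝ, c ≤ p ∧ p < q ∧ q ≤ d ∧ Set.BijOn g (Ioo p q) (Ioo e e') := by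
  set S : Set ℝ := Ioo c d ∩ g ⁻¹' (Ioo e e') with hS
  have hO : IsOpen S := hcont.isOpen_inter_preimage isOpen_Ioo isOpen_Ioo
  have hne : S.Nonempty := by
    have hm : (e + e')/2 ∈ Ioo e e' := by constructor <;> linarith
    obtain ⟨x, hx, hgx⟩ := hbij.surjOn (hsub hm)
    exact ⟨x, hx, by simp [hgx]; exact ⟨hm.1, hm.2⟩⟩
  have hbb : BddBelow S := BddBelow.mono inter_subset_left (bddBelow_Ioo)
  have hba : BddAbove S := BddAbove.mono inter_subset_left (bddAbove_Ioo)
  have hoc : S.OrdConnected := by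
    constructor
    rintro x ⟨hx1, hx2⟩ y ⟨hy1, hy2⟩ z ⟨hz1, hz2⟩
    have hz : z ∈ Ioo c d := ⟨lt_of_lt_of_le hx1.1 hz1, lt_of_le_of_lt hz2 hy1.2⟩
    refine ⟨hz, ?_⟩
    rcases hmono with hm | hm
    · have h1 := hm.monotoneOn hx1 hz hz1
      have h2 := hm.monotoneOn hz hy1 hz2
      exact ⟨lt_of_lt_of_le hx2.1 h1, lt_of_le_of_lt h2 hy2.2⟩
    · have h1 := hm.antitoneOn hx1 hz hz1
      have h2 := hm.antitoneOn hz hy1 hz2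
      exact ⟨lt_of_lt_of_le hy2.1 h2, lt_of_le_of_lt h1 hx2.2⟩
  have hSeq := aux_open_eq_Ioo S hO hne hbb hba hoc
  refine ⟨sInf S, sSup S, ?_, ?_, ?_, ?_⟩
  · exact le_csInf hne (fun y hy => (hy.1.1).le)
  · obtain ⟨x, hx⟩ := hne
    have h1 : sInf S ≤ x := csInf_le hbb hx
    have h2 : x ≤ sSup S := le_csSup hba hx
    have : x ∈ Ioo (sInf S) (sSup S) := hSeq ▸ hx
    exact lt_trans this.1 this.2
  · exact csSup_le hne (fun y hy => (hy.1.2).le)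
  · rw [← hSeq]
    refine ⟨fun x hx => hx.2, ?_, ?_⟩
    · intro x hx y hy hxy
      exact hbij.injOn hx.1 hy.1 hxy
    · intro y hy
      obtain ⟨x, hx, hgx⟩ := hbij.surjOn (hsub hy)
      exact ⟨x, ⟨hx, by simp [hgx]; exact ⟨hy.1, hy.2⟩⟩, hgx⟩


lemma aux_image (g : ℝ → ℝ) (c d σ : ℝ) (hcd : c < d) (hσ : 0 < σ)
    (hcont : ContinuousOn g (Ioo c d))
    (hmono : StrictMonoOn g (Ioo c d) ∨ StrictAntiOn g (Ioo c d))
    (hbd : ∀ x ∈ Ioo c d, g x ∈ Icc (0:ℝ) 1)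
    (hexp : ∀ x ∈ Ioo c d, ∀ y ∈ Ioo c d, x ≤ y → σ*(y-x) ≤ |g y - g x|) :
    ∃ A B : ℝ, Set.BijOn g (Ioo c d) (Ioo A B) ∧ 0 ≤ A ∧ B ≤ 1 ∧ σ*(d-c) ≤ B - A := by
  set S : Set ℝ := g '' Ioo c d with hSdef
  have hne : S.Nonempty := (nonempty_Ioo.2 hcd).image g
  have hsub01 : S ⊆ Icc (0:ℝ) 1 := by rintro y ⟨x, hx, rfl⟩; exact hbd x hx
  have hbb : BddBelow S := BddBelow.mono hsub01 bddBelow_Icc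
  have hba : BddAbove S := BddAbove.mono hsub01 bddAbove_Icc
  set A := sInf S with hA
  set B := sSup S with hB
  have hmemAB : ∀ x ∈ S, A ≤ x ∧ x ≤ B := fun x hx => ⟨csInf_le hbb hx, le_csSup hba hx⟩
  have himg : S = Ioo A B := by
    apply Subset.antisymm
    · rintro y ⟨x, hx, rfl⟩
      have hx1 : (c+x)/2 ∈ Ioo c d := ⟨by linarith [hx.1], by linarith [hx.1, hx.2]⟩
      have hx2 : (x+d)/2 ∈ Ioo c d := ⟨by linarith [hx.1, hx.2], by linarith [hx.2]⟩
      have hlt1 : (c+x)/2 < x := by linarith [hx.1]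
      have hlt2 : x < (x+d)/2 := by linarith [hx.2]
      have hm1 := hmemAB _ (mem_image_of_mem g hx1)
      have hm2 := hmemAB _ (mem_image_of_mem g hx2)
      rcases hmono with hm | hm
      · exact ⟨lt_of_le_of_lt hm1.1 (hm hx1 hx hlt1), lt_of_lt_of_le (hm hx hx2 hlt2) hm2.2⟩
      · exact ⟨lt_of_le_of_lt hm2.1 (hm hx hx2 hlt2), lt_of_lt_of_le (hm hx1 hx hlt1) hm1.2⟩
    · rintro y ⟨hy1, hy2⟩
      obtain ⟨u, hu, huy⟩ := exists_lt_of_csInf_lt hne hy1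
      obtain ⟨v, hv, hyv⟩ := exists_lt_of_lt_csSup hne hy2
      obtain ⟨p, hp, rfl⟩ := hu
      obtain ⟨q, hq, rfl⟩ := hv
      have huIcc : uIcc p q ⊆ Ioo c d := by
        rw [uIcc_eq_union]
        exact union_subset (Icc_subset_Ioo hp.1 hq.2) (Icc_subset_Ioo hq.1 hp.2)
      have hyu : y ∈ uIcc (g p) (g q) := by
        rw [Set.mem_uIcc]; left; exact ⟨huy.le, hyv.le⟩
      have := intermediate_value_uIcc (hcont.mono huIcc) hyu
      exact image_mono huIcc this
  have hinj : Set.InjOn g (Ioo c d) := by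
    rcases hmono with hm | hm
    · exact hm.injOn
    · exact hm.injOn
  have hbij : Set.BijOn g (Ioo c d) (Ioo A B) := by
    refine ⟨fun x hx => himg ▸ mem_image_of_mem g hx, hinj, ?_⟩
    rw [← himg]; exact subset_rfl
  have hA0 : 0 ≤ A := le_csInf hne (fun y hy => (hsub01 hy).1)
  have hB1 : B ≤ 1 := csSup_le hne (fun y hy => (hsub01 hy).2)
  refine ⟨A, B, hbij, hA0, hB1, ?_⟩
  by_contra hcon
  push_neg at hcon
  have hAB : A ≤ B := by
    obtain ⟨y, hy⟩ := hne
    linarith [(hmemAB y hy).1, (hmemAB y hy).2]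
  set ε := σ*(d-c) - (B-A) with hε
  have hεpos : 0 < ε := by simp [hε]; linarith
  set t := ε/(3*σ) with ht
  have htpos : 0 < t := div_pos hεpos (by linarith)
  have hst : σ * t = ε/3 := by rw [ht]; field_simp
  have htle : t ≤ (d-c)/3 := by
    rw [ht, div_le_div_iff₀ (by linarith) (by norm_num)]
    nlinarith
  have hx : c + t ∈ Ioo c d := ⟨by linarith, by linarith⟩
  have hy : d - t ∈ Ioo c d := ⟨by linarith, by linarith⟩
  have hxy : c + t ≤ d - t := by linarith
  have hkey := hexp _ hx _ hy hxy
  have hb1 := hmemAB _ (mem_image_of_mem g hx)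
  have hb2 := hmemAB _ (mem_image_of_mem g hy)
  have habs : |g (d-t) - g (c+t)| ≤ B - A := by
    rw [abs_sub_le_iff]; constructor <;> linarith
  nlinarith

lemma aux_single (l : ℕ) (a b : Fin l → ℝ)
    (hdisj : Pairwise fun i j => Disjoint (Ioo (a i) (b i)) (Ioo (a j) (b j)))
    (c d : ℝ) (hcd : c < d) (hU : Ioo c d ⊆ ⋃ j, Ioo (a j) (b j)) :
    ∃ j, Ioo c d ⊆ Ioo (a j) (b j) := by
  set x := (c+d)/2 with hx
  have hxm : x ∈ Ioo c d := ⟨by simp [hx]; linarith, by simp [hx]; linarith⟩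
  obtain ⟨j, hj⟩ := mem_iUnion.1 (hU hxm)
  refine ⟨j, ?_⟩
  have hright : ∀ y ∈ Ioo c d, x ≤ y → y < b j := by
    intro y hy hxy
    by_contra hcon
    push_neg at hcon
    have hbm : b j ∈ Ioo c d := ⟨lt_trans hxm.1 hj.2, lt_of_le_of_lt hcon hy.2⟩
    obtain ⟨j'', hj''⟩ := mem_iUnion.1 (hU hbm)
    have hne : j ≠ j'' := by
      rintro rfl
      exact absurd hj''.2 (lt_irrefl (b j))
    set t := (max (a j'') x + b j)/2 with ht
    have hmaxlt : max (a j'') x < b j := max_lt hj''.1 hj.2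
    have htj : t ∈ Ioo (a j) (b j) := by
      constructor
      · have : a j < x := hj.1
        have : x ≤ max (a j'') x := le_max_right _ _
        simp [ht]; linarith
      · simp [ht]; linarith
    have htj'' : t ∈ Ioo (a j'') (b j'') := by
      constructor
      · have : a j'' ≤ max (a j'') x := le_max_left _ _
        simp [ht]; linarith
      · have : b j < b j'' := hj''.2
        simp [ht]; linarith
    exact absurd htj (disjoint_left.1 (hdisj hne) · htj'')
  have hleft : ∀ y ∈ Ioo c d, y ≤ x → a j < y := by
    intro y hy hxy
    by_contra hcon
    push_neg at hcon
    have ham : a j ∈ Ioo c d := ⟨lt_of_lt_of_le hy.1 hcon, lt_trans hj.1 hxm.2⟩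
    obtain ⟨j'', hj''⟩ := mem_iUnion.1 (hU ham)
    have hne : j ≠ j'' := by
      rintro rfl
      exact absurd hj''.1 (lt_irrefl (a j))
    set t := (a j + min (b j'') x)/2 with ht
    have hltmin : a j < min (b j'') x := lt_min hj''.2 hj.1
    have htj : t ∈ Ioo (a j) (b j) := by
      constructor
      · simp [ht]; linarith
      · have : min (b j'') x ≤ x := min_le_right _ _
        have : x < b j := hj.2
        simp [ht]; linarith
    have htj'' : t ∈ Ioo (a j'') (b j'') := by
      constructor
      · have : a j'' < a j := hj''.1
        simp [ht]; linarith
      · have : min (b j'') x ≤ b j'' := min_le_left _ _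
        simp [ht]; linarith
    exact absurd htj (disjoint_left.1 (hdisj hne) · htj'')
  intro y hy
  rcases le_total x y with h | h
  · exact ⟨lt_of_lt_of_le hj.1 h, hright y hy h⟩
  · exact ⟨hleft y hy h, lt_of_le_of_lt h hj.2⟩


lemma aux_mvt (f : ℝ → ℝ) (σ α β : ℝ) (hC1 : ContDiffOn ℝ 1 f (Ioo α β))
    (hexp : ∀ x ∈ Ioo α β, σ ≤ |deriv f x|) :
    ∀ x ∈ Ioo α β, ∀ y ∈ Ioo α β, x ≤ y → σ*(y-x) ≤ |f y - f x| := by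
  intro x hx y hy hxy
  rcases eq_or_lt_of_le hxy with rfl | hlt
  · simp
  have hIcc : Icc x y ⊆ Ioo α β := Icc_subset_Ioo hx.1 hy.2
  have hcont : ContinuousOn f (Icc x y) := hC1.continuousOn.mono hIcc
  have hdiff : ∀ z ∈ Ioo x y, HasDerivAt f (deriv f z) z := by
    intro z hz
    have hz' : z ∈ Ioo α β := hIcc (Ioo_subset_Icc_self hz)
    have := (hC1.differentiableOn one_ne_zero).differentiableAt (isOpen_Ioo.mem_nhds hz')
    exact this.hasDerivAt
  obtain ⟨ξ, hξ, heq⟩ := exists_hasDerivAt_eq_slope f (deriv f) hlt hcont hdiff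
  have hξ' : ξ ∈ Ioo α β := hIcc (Ioo_subset_Icc_self hξ)
  have h1 : σ ≤ |deriv f ξ| := hexp ξ hξ'
  rw [heq, abs_div, abs_of_pos (by linarith : (0:ℝ) < y - x)] at h1
  rw [le_div_iff₀ (by linarith : (0:ℝ) < y - x)] at h1
  linarith [h1]

lemma aux_step (f : ℝ → ℝ) (σ : ℝ) (hσ : 2 < σ) (l : ℕ)
    (a b : Fin l → ℝ) (hab : ∀ j, a j < b j)
    (hdisj : Pairwise fun i j => Disjoint (Ioo (a i) (b i)) (Ioo (a j) (b j)))
    (hmaps : ∀ j, Set.MapsTo f (Ioo (a j) (b j)) (Icc (0:ℝ) 1))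
    (hmono : ∀ j, StrictMonoOn f (Ioo (a j) (b j)) ∨ StrictAntiOn f (Ioo (a j) (b j)))
    (hC1 : ∀ j, ContDiffOn ℝ 1 f (Ioo (a j) (b j)))
    (hexp : ∀ j, ∀ x ∈ Ioo (a j) (b j), σ ≤ |deriv f x|)
    (hfin : Set.Finite (Icc (0:ℝ) 1 \ ⋃ j, Ioo (a j) (b j)))
    (c d : ℝ) (hcd : c < d) (hU : Ioo c d ⊆ ⋃ j, Ioo (a j) (b j)) :
    (∃ e e' : ℝ, c ≤ e ∧ e < e' ∧ e' ≤ d ∧ ∃ j, Set.BijOn f (Ioo e e') (Ioo (a j) (b j)))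
    ∨ (∃ e e' g g' : ℝ, c ≤ e ∧ e < e' ∧ e' ≤ d ∧ g < g' ∧
        Ioo g g' ⊆ ⋃ j, Ioo (a j) (b j) ∧ (σ/2)*(d-c) ≤ g' - g ∧
        Set.BijOn f (Ioo e e') (Ioo g g')) := by
  obtain ⟨j₀, hj₀⟩ := aux_single l a b hdisj c d hcd hU
  have hcont' : ContinuousOn f (Ioo c d) := (hC1 j₀).continuousOn.mono hj₀
  have hmono' : StrictMonoOn f (Ioo c d) ∨ StrictAntiOn f (Ioo c d) :=
    (hmono j₀).imp (fun h => h.mono hj₀) (fun h => h.mono hj₀)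
  have hbd : ∀ x ∈ Ioo c d, f x ∈ Icc (0:ℝ) 1 := fun x hx => hmaps j₀ (hj₀ hx)
  have hexp' : ∀ x ∈ Ioo c d, ∀ y ∈ Ioo c d, x ≤ y → σ*(y-x) ≤ |f y - f x| :=
    fun x hx y hy h => aux_mvt f σ (a j₀) (b j₀) (hC1 j₀) (hexp j₀) x (hj₀ hx) y (hj₀ hy) h
  obtain ⟨A, B, hbij, hA0, hB1, hlen⟩ :=
    aux_image f c d σ hcd (by linarith) hcont' hmono' hbd hexp'
  have hAB : A < B := by nlinarith
  by_cases hcase : ∃ j', Ioo (a j') (b j') ⊆ Ioo A B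
  · obtain ⟨j', hj'⟩ := hcase
    obtain ⟨p, q, hp, hpq, hq, hbijpq⟩ :=
      aux_pullback f c d A B (a j') (b j') hbij hcont' hmono' (hab j') hj'
    exact Or.inl ⟨p, q, hp, hpq, hq, j', hbijpq⟩
  · push_neg at hcase
    set M := (A+B)/2 with hM
    have hAM : A < M := by simp [hM]; linarith
    have hMB : M < B := by simp [hM]; linarith
    -- find g g' j₁ with Ioo g g' ⊆ Ioo A B, Ioo g g' ⊆ branch j₁, g' - g = (B-A)/2
    have main : ∃ g g' : ℝ, Ioo g g' ⊆ Ioo A B ∧ (∃ j₁, Ioo g g' ⊆ Ioo (a j₁) (b j₁)) ∧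
        g' - g = (B-A)/2 := by
      by_cases hMU : M ∈ ⋃ j, Ioo (a j) (b j)
      · obtain ⟨j₁, hj₁⟩ := mem_iUnion.1 hMU
        obtain ⟨z, hz, hznot⟩ := not_subset.1 (hcase j₁)
        rcases not_and_or.1 (fun h => hznot (⟨h.1, h.2⟩ : z ∈ Ioo A B)) with hz1 | hz2
        · push_neg at hz1
          have haA : a j₁ ≤ A := le_trans hz.1.le hz1
          refine ⟨A, M, Ioo_subset_Ioo le_rfl hMB.le, ⟨j₁, ?_⟩, by simp [hM]; ring⟩
          intro w hw
          exact ⟨lt_of_le_of_lt haA hw.1, lt_trans hw.2 hj₁.2⟩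
        · push_neg at hz2
          have hbB : B ≤ b j₁ := le_trans hz2 hz.2.le
          refine ⟨M, B, Ioo_subset_Ioo hAM.le le_rfl, ⟨j₁, ?_⟩, by simp [hM]; ring⟩
          intro w hw
          exact ⟨lt_trans hj₁.1 hw.1, lt_of_lt_of_le hw.2 hbB⟩
      · -- M is in the finite exceptional set
        have hM01 : M ∈ Icc (0:ℝ) 1 := by
          constructor
          · linarith
          · linarith
        set s : Finset ℝ := hfin.toFinset.filter (fun z => A < z ∧ z < M) with hs
        set t : ℝ := if h : s.Nonempty then s.max' h else A with ht
        have htA : A ≤ t := by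
          rw [ht]
          split_ifs with h
          · exact (Finset.mem_filter.1 (s.max'_mem h)).2.1.le
          · exact le_rfl
        have htM : t < M := by
          rw [ht]
          split_ifs with h
          · exact (Finset.mem_filter.1 (s.max'_mem h)).2.2
          · exact hAM
        have htgap : ∀ w, t < w → w < M → w ∈ ⋃ j, Ioo (a j) (b j) := by
          intro w htw hwM
          by_contra hwU
          have hwF : w ∈ hfin.toFinset := by
            rw [Set.Finite.mem_toFinset]
            refine ⟨⟨?_, ?_⟩, hwU⟩
            · linarith
            · linarith
          have hws : w ∈ s := by
            rw [hs, Finset.mem_filter]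
            exact ⟨hwF, lt_of_le_of_lt htA htw, hwM⟩
          have hne : s.Nonempty := ⟨w, hws⟩
          have := s.le_max' w hws
          rw [ht] at htw
          rw [dif_pos hne] at htw
          linarith
        obtain ⟨j₁, hj₁⟩ := aux_single l a b hdisj t M htM (fun w hw => htgap w hw.1 hw.2)
        have hbM : M ≤ b j₁ := by
          by_contra hcon
          push_neg at hcon
          have h1 : max t (b j₁) < M := max_lt htM hcon
          have h2 : (max t (b j₁) + M)/2 ∈ Ioo t M := by
            constructor
            · have := le_max_left t (b j₁); linarith
            · linarith
          have h3 := (hj₁ h2).2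
          have := le_max_right t (b j₁)
          linarith
        have hbM' : b j₁ = M := by
          rcases eq_or_lt_of_le hbM with h | h
          · exact h.symm
          · exfalso
            apply hMU
            have hw : (t+M)/2 ∈ Ioo t M := ⟨by linarith, by linarith⟩
            exact mem_iUnion.2 ⟨j₁, lt_trans (hj₁ hw).1 (by linarith [hw.2] : (t+M)/2 < M), h⟩
        obtain ⟨z, hz, hznot⟩ := not_subset.1 (hcase j₁)
        have hzA : z ≤ A := by
          by_contra hcon
          push_neg at hcon
          exact hznot ⟨hcon, by rw [hbM'] at hz; linarith [hz.2]⟩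
        have haA : a j₁ ≤ A := le_trans hz.1.le hzA
        refine ⟨A, M, Ioo_subset_Ioo le_rfl hMB.le, ⟨j₁, ?_⟩, by simp [hM]; ring⟩
        intro w hw
        rw [hbM']
        exact ⟨lt_of_le_of_lt haA hw.1, hw.2⟩
    obtain ⟨g, g', hgAB, ⟨j₁, hgbr⟩, hglen⟩ := main
    have hgg : g < g' := by linarith
    obtain ⟨p, q, hp, hpq, hq, hbijpq⟩ :=
      aux_pullback f c d A B g g' hbij hcont' hmono' hgg hgAB
    refine Or.inr ⟨p, q, g, g', hp, hpq, hq, hgg, ?_, by linarith, hbijpq⟩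
    exact hgbr.trans (subset_iUnion (fun j => Ioo (a j) (b j)) j₁)

lemma aux_comp_mono {g f : ℝ → ℝ} {s t : Set ℝ} (hmap : Set.MapsTo f s t)
    (hf : StrictMonoOn f s ∨ StrictAntiOn f s)
    (hg : StrictMonoOn g t ∨ StrictAntiOn g t) :
    StrictMonoOn (g ∘ f) s ∨ StrictAntiOn (g ∘ f) s := by
  rcases hf with hf | hf <;> rcases hg with hg | hg
  · exact Or.inl fun x hx y hy h => hg (hmap hx) (hmap hy) (hf hx hy h)
  · exact Or.inr fun x hx y hy h => hg (hmap hx) (hmap hy) (hf hx hy h)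
  · exact Or.inr fun x hx y hy h => hg (hmap hy) (hmap hx) (hf hx hy h)
  · exact Or.inl fun x hx y hy h => hg (hmap hy) (hmap hx) (hf hx hy h)

theorem stmt17 (f : ℝ → ℝ) (σ : ℝ) (hσ : 2 < σ) (l : ℕ) (hl : 0 < l)
    (a b : Fin l → ℝ) (hab : ∀ j, a j < b j)
    (hsub : ∀ j, Ioo (a j) (b j) ⊆ Icc (0:ℝ) 1)
    (hdisj : Pairwise fun i j => Disjoint (Ioo (a i) (b i)) (Ioo (a j) (b j)))
    (hmaps : ∀ j, Set.MapsTo f (Ioo (a j) (b j)) (Icc (0:ℝ) 1))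
    (hmono : ∀ j, StrictMonoOn f (Ioo (a j) (b j)) ∨ StrictAntiOn f (Ioo (a j) (b j)))
    (hC1 : ∀ j, ContDiffOn ℝ 1 f (Ioo (a j) (b j)))
    (hexp : ∀ j, ∀ x ∈ Ioo (a j) (b j), σ ≤ |deriv f x|)
    (hfin : Set.Finite (Icc (0:ℝ) 1 \ ⋃ j, Ioo (a j) (b j))) :
    ∀ δ > (0:ℝ), ∃ n : ℕ, ∀ c d : ℝ, c < d → δ ≤ d - c →
      Ioo c d ⊆ ⋃ j, Ioo (a j) (b j) →
      ∃ k ≤ n, ∃ c' d' : ℝ, c ≤ c' ∧ c' < d' ∧ d' ≤ d ∧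
        ∃ j, Set.BijOn (f^[k]) (Ioo c' d') (Ioo (a j) (b j)) := by
  intro δ hδ
  have hr : (1:ℝ) < σ/2 := by linarith
  have hr0 : (0:ℝ) < σ/2 := by linarith
  obtain ⟨n, hn⟩ := pow_unbounded_of_one_lt (2/δ) hr
  refine ⟨n, ?_⟩
  intro c d hcd hδd hU
  -- main induction
  have key : ∀ m : ℕ,
      (∃ k ≤ m, ∃ c' d' : ℝ, c ≤ c' ∧ c' < d' ∧ d' ≤ d ∧
        ∃ j, Set.BijOn (f^[k]) (Ioo c' d') (Ioo (a j) (b j))) ∨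
      (∃ c' d' c₁ d₁ : ℝ, c ≤ c' ∧ c' < d' ∧ d' ≤ d ∧ c₁ < d₁ ∧
        Ioo c₁ d₁ ⊆ (⋃ j, Ioo (a j) (b j)) ∧ (σ/2)^m * (d-c) ≤ d₁ - c₁ ∧
        Set.BijOn (f^[m]) (Ioo c' d') (Ioo c₁ d₁) ∧
        ContinuousOn (f^[m]) (Ioo c' d') ∧
        (StrictMonoOn (f^[m]) (Ioo c' d') ∨ StrictAntiOn (f^[m]) (Ioo c' d'))) := by
    intro m
    induction m with
    | zero =>
      right
      refine ⟨c, d, c, d, le_rfl, hcd, le_rfl, hcd, hU, by norm_num, ?_, ?_, ?_⟩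
      · simp [Function.iterate_zero]
        exact bijOn_id _
      · simp [Function.iterate_zero]
        exact continuousOn_id
      · left
        simp [Function.iterate_zero]
        exact strictMonoOn_id
    | succ m ih =>
      rcases ih with ⟨k, hk, hrest⟩ | ⟨c', d', c₁, d₁, hcc', hc'd', hd'd, hc₁d₁, hU₁, hlen₁, hbij₁, hcont₁, hmono₁⟩
      · exact Or.inl ⟨k, le_trans hk (Nat.le_succ m), hrest⟩
      rcases aux_step f σ hσ l a b hab hdisj hmaps hmono hC1 hexp hfin c₁ d₁ hc₁d₁ hU₁ with
        ⟨e, e', hce, hee, hed, j', hbij'⟩ | ⟨e, e', g, g', hce, hee, hed, hgg, hgU, hglen, hbij'⟩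
      · -- found a full branch at step m+1
        obtain ⟨p, q, hp, hpq, hq, hbijpq⟩ :=
          aux_pullback (f^[m]) c' d' c₁ d₁ e e' hbij₁ hcont₁ hmono₁ hee
            (Ioo_subset_Ioo hce hed)
        refine Or.inl ⟨m+1, le_rfl, p, q, le_trans hcc' hp, hpq, le_trans hq hd'd, j', ?_⟩
        rw [Function.iterate_succ']
        exact hbij'.comp hbijpq
      · -- grow once more
        obtain ⟨p, q, hp, hpq, hq, hbijpq⟩ :=
          aux_pullback (f^[m]) c' d' c₁ d₁ e e' hbij₁ hcont₁ hmono₁ hee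
            (Ioo_subset_Ioo hce hed)
        obtain ⟨j₂, hj₂⟩ := aux_single l a b hdisj c₁ d₁ hc₁d₁ hU₁
        have hee'br : Ioo e e' ⊆ Ioo (a j₂) (b j₂) :=
          (Ioo_subset_Ioo hce hed).trans hj₂
        have hfcont : ContinuousOn f (Ioo e e') := (hC1 j₂).continuousOn.mono hee'br
        have hfmono : StrictMonoOn f (Ioo e e') ∨ StrictAntiOn f (Ioo e e') :=
          (hmono j₂).imp (fun h => h.mono hee'br) (fun h => h.mono hee'br)
        have hpq' : Ioo p q ⊆ Ioo c' d' := Ioo_subset_Ioo hp hq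
        have hcontpq : ContinuousOn (f^[m]) (Ioo p q) := hcont₁.mono hpq'
        have hmonopq : StrictMonoOn (f^[m]) (Ioo p q) ∨ StrictAntiOn (f^[m]) (Ioo p q) :=
          hmono₁.imp (fun h => h.mono hpq') (fun h => h.mono hpq')
        refine Or.inr ⟨p, q, g, g', le_trans hcc' hp, hpq, le_trans hq hd'd, hgg, hgU, ?_, ?_, ?_, ?_⟩
        · calc (σ/2)^(m+1) * (d-c) = (σ/2) * ((σ/2)^m * (d-c)) := by ring
          _ ≤ (σ/2) * (d₁ - c₁) := by
              apply mul_le_mul_of_nonneg_left hlen₁ (by linarith)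
          _ ≤ g' - g := hglen
        · rw [Function.iterate_succ']
          exact hbij'.comp hbijpq
        · rw [Function.iterate_succ']
          exact hfcont.comp hcontpq hbijpq.mapsTo
        · rw [Function.iterate_succ']
          exact aux_comp_mono hbijpq.mapsTo hmonopq hfmono
  rcases key n with h | ⟨c', d', c₁, d₁, hcc', hc'd', hd'd, hc₁d₁, hU₁, hlen₁, hbij₁, hcont₁, hmono₁⟩
  · exact h
  · exfalso
    -- Ioo c₁ d₁ ⊆ Icc 0 1, so d₁ - c₁ ≤ 2, but the length bound is > 2
    have hsub01 : Ioo c₁ d₁ ⊆ Icc (0:ℝ) 1 := by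
      intro x hx
      obtain ⟨j, hj⟩ := mem_iUnion.1 (hU₁ hx)
      exact hsub j hj
    set w₁ := c₁ + (d₁-c₁)/4 with hw₁
    set w₂ := d₁ - (d₁-c₁)/4 with hw₂
    have h1 : w₁ ∈ Ioo c₁ d₁ := ⟨by simp [hw₁]; linarith, by simp [hw₁]; linarith⟩
    have h2 : w₂ ∈ Ioo c₁ d₁ := ⟨by simp [hw₂]; linarith, by simp [hw₂]; linarith⟩
    have hb1 := hsub01 h1
    have hb2 := hsub01 h2
    have hd2 : d₁ - c₁ ≤ 2 := by
      simp [hw₁, hw₂] at hb1 hb2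
      linarith [hb1.1, hb2.2]
    have hpow : 2 < (σ/2)^n * δ := by
      rw [div_lt_iff₀ hδ] at hn
      linarith
    have hpos : (0:ℝ) < (σ/2)^n := pow_pos hr0 n
    have : (σ/2)^n * δ ≤ (σ/2)^n * (d-c) := mul_le_mul_of_nonneg_left hδd hpos.le
    linarith
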